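/- Let A : ℕ → ℕ be defined by A(0) = 1, A(1) = 2, and A(n) = 1 + C(A(n−2)+1, 2) + A(n−2)·(A(n−1) − A(n−2)) for n ≥ 2, and let φ = (1+√5)/2. Then there exist real constants K₁ > 0 and K₂ > 1 such that A(n)/(K₁·K₂^(φⁿ)) tends to 1 as n → ∞. -/

import Mathlib

open Filter

def A : ℕ → ℕ
  | 0 => 1
  | 1 => 2
  | n + 2 => 1 + Nat.choose (A n + 1) 2 + A n * (A (n + 1) - A n)

noncomputable def φ : ℝ := (1 + Real.sqrt 5) / 2

lemma A_basic : ∀ n, 1 ≤ A n ∧ A n < A (n+1) := by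
  intro n
  induction n using Nat.twoStepInduction with
  | zero => exact ⟨by decide, by decide⟩
  | one => exact ⟨by decide, by decide⟩
  | more n ih1 ih2 =>
    obtain ⟨h1, h2'⟩ := ih2
    have h2 : A (n+1) < A (n+2) := h2'
    refine ⟨by omega, ?_⟩
    show A (n+2) < 1 + Nat.choose (A (n+1) + 1) 2 + A (n+1) * (A (n + 2) - A (n+1))
    have hc : A (n+1) ≤ (A (n+1) + 1).choose 2 := by
      rw [Nat.choose_two_right]
      calc A (n+1) = 2 * A (n+1) / 2 := by omega
        _ ≤ (A (n+1) + 1) * A (n+1) / 2 := by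
          apply Nat.div_le_div_right
          exact Nat.mul_le_mul_right _ (by omega)
    have hm : A (n+2) - A (n+1) ≤ A (n+1) * (A (n+2) - A (n+1)) := Nat.le_mul_of_pos_left _ h1
    omega

lemma A_pos (n : ℕ) : 1 ≤ A n := (A_basic n).1
lemma A_lt (n : ℕ) : A n < A (n+1) := (A_basic n).2
lemma A_le (n : ℕ) : A n ≤ A (n+1) := le_of_lt (A_lt n)

lemma A_ge (n : ℕ) : n + 1 ≤ A n := by
  induction n with
  | zero => decide
  | succ n ih => have := A_lt n; omega

lemma A_rpos (n : ℕ) : (0:ℝ) < A n := by exact_mod_cast A_pos n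

lemma key (n : ℕ) : (A (n+2) : ℝ) = A n * A (n+1) + (2 + A n - (A n)^2) / 2 := by
  have h : A n ≤ A (n+1) := A_le n
  show ((1 + Nat.choose (A n + 1) 2 + A n * (A (n + 1) - A n) : ℕ) : ℝ) = _
  push_cast [Nat.cast_choose_two, h]
  ring

-- lower bound: A(n+2) ≥ a*b/2
lemma A_lb (n : ℕ) : (A n : ℝ) * A (n+1) / 2 ≤ A (n+2) := by
  rw [key n]
  have h : (A n : ℝ) ≤ A (n+1) := by exact_mod_cast A_le n
  have h1 : (1:ℝ) ≤ A n := by exact_mod_cast A_pos n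
  nlinarith

-- upper bound: A(n+2) ≤ a*b when a ≥ 2
lemma A_ub (n : ℕ) (ha : 2 ≤ A n) : (A (n+2) : ℝ) ≤ A n * A (n+1) := by
  rw [key n]
  have h2 : (2:ℝ) ≤ A n := by exact_mod_cast ha
  nlinarith

lemma A_double (n : ℕ) (ha : 3 ≤ A n) : 2 * (A (n+1) : ℝ) ≤ A (n+2) := by
  rw [key n]
  have h3 : (3:ℝ) ≤ A n := by exact_mod_cast ha
  have hb : (A n : ℝ) + 1 ≤ A (n+1) := by exact_mod_cast A_lt n
  nlinarith

lemma A_pow (n : ℕ) : (2:ℝ)^n ≤ 4 * A n := by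
  have H : ∀ m, (2:ℝ)^(m+3) ≤ 4 * A (m+3) := by
    intro m
    induction m with
    | zero => norm_num [show A 3 = 6 from rfl]
    | succ m ih =>
      have h3 : 3 ≤ A (m+2) := le_trans (by omega) (A_ge (m+2))
      have := A_double (m+2) h3
      calc (2:ℝ)^(m+4) = 2 * 2^(m+3) := by ring
        _ ≤ 2 * (4 * A (m+3)) := by linarith
        _ ≤ 4 * A (m+2+2) := by linarith
  match n with
  | 0 => norm_num [show A 0 = 1 from rfl]
  | 1 => norm_num [show A 1 = 2 from rfl]
  | 2 => norm_num [show A 2 = 3 from rfl]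
  | (m+3) => exact H m

lemma sqrt5_lt : Real.sqrt 5 < 2.32 := by
  rw [show (2.32:ℝ) = 2.32 from rfl] at *
  have : (5:ℝ) < 2.32^2 := by norm_num
  exact (Real.sqrt_lt' (by norm_num)).2 this

lemma sqrt5_gt : (2:ℝ) < Real.sqrt 5 := by
  have := Real.sq_sqrt (by norm_num : (5:ℝ) ≥ 0)
  nlinarith [Real.sqrt_nonneg 5]

lemma φ_lt : φ < 1.66 := by unfold φ; linarith [sqrt5_lt]
lemma φ_gt : 1.5 < φ := by unfold φ; linarith [sqrt5_gt]
lemma φ_pos : 0 < φ := by linarith [φ_gt]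
lemma one_lt_φ : 1 < φ := by linarith [φ_gt]
lemma φ_sq : φ^2 = φ + 1 := by
  have h5 := Real.sq_sqrt (by norm_num : (5:ℝ) ≥ 0)
  unfold φ; field_simp; nlinarith

lemma φ_pow_le (m n : ℕ) (h : m ≤ n) : φ^m ≤ φ^n :=
  pow_le_pow_right₀ (le_of_lt one_lt_φ) h

lemma one_le_φ_pow (n : ℕ) : 1 ≤ φ^n := one_le_pow₀ (le_of_lt one_lt_φ)

-- log(1-x) ≥ -2x for 0 ≤ x ≤ 1/2
lemma log_one_sub_ge (x : ℝ) (h0 : 0 ≤ x) (h1 : x ≤ 1/2) : -(2*x) ≤ Real.log (1 - x) := by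
  have hx : (0:ℝ) < 1 - x := by linarith
  rw [← Real.log_exp (-(2*x))]
  apply Real.log_le_log (Real.exp_pos _)
  have h2 := Real.add_one_le_exp (2*x)
  have h3 : Real.exp (-(2*x)) * Real.exp (2*x) = 1 := by
    rw [← Real.exp_add]; simp
  nlinarith [Real.exp_pos (-(2*x)), Real.exp_pos (2*x)]

noncomputable def B (n : ℕ) : ℝ := Real.log (A n)

lemma B0 : B 0 = 0 := by simp [B, show A 0 = 1 from rfl]
lemma B1 : B 1 = Real.log 2 := by norm_num [B, show A 1 = 2 from rfl]
lemma B_nonneg (n : ℕ) : 0 ≤ B n := Real.log_nonneg (by exact_mod_cast A_pos n)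

-- B(n+2) ≥ B(n+1) + B(n) - log 2
lemma B_low (n : ℕ) : B (n+1) + B n - Real.log 2 ≤ B (n+2) := by
  have h := A_lb n
  have h1 : (0:ℝ) < A n := A_rpos n
  have h2 : (0:ℝ) < A (n+1) := A_rpos (n+1)
  have := Real.log_le_log (by positivity) h
  rw [Real.log_div (by positivity) (by norm_num), Real.log_mul (ne_of_gt h1) (ne_of_gt h2)] at this
  simp only [B]
  linarith [this]

-- |B(n+2) - B(n+1) - B(n)| ≤ 16 (1/2)^n
lemma eps_bound (n : ℕ) : |B (n+2) - B (n+1) - B n| ≤ 16 * (1/2:ℝ)^n := by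
  match n with
  | 0 =>
    rw [B0, B1, show B 2 = Real.log 3 from by norm_num [B, show A 2 = 3 from rfl]]
    rw [abs_le]
    constructor
    · have := Real.log_le_sub_one_of_pos (by norm_num : (0:ℝ) < 2)
      have h3 : 0 ≤ Real.log 3 := Real.log_nonneg (by norm_num)
      norm_num; linarith
    · have := Real.log_le_sub_one_of_pos (by norm_num : (0:ℝ) < 3)
      have h2 : 0 ≤ Real.log 2 := Real.log_nonneg (by norm_num)
      norm_num; linarith
  | 1 =>
    have : B 3 = B 2 + B 1 := by
      show Real.log (A 3) = Real.log (A 2) + Real.log (A 1)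
      rw [show A 3 = 6 from rfl, show A 2 = 3 from rfl, show A 1 = 2 from rfl]
      rw [show ((6:ℕ):ℝ) = 3 * 2 by norm_num]
      rw [Real.log_mul (by norm_num) (by norm_num)]
      norm_num
    rw [this]; simp
  | (m+2) =>
    -- n = m+2, indices: B(m+4) - B(m+3) - B(m+2)
    set a := (A (m+2) : ℝ) with ha
    set b := (A (m+3) : ℝ) with hb
    have hapos : (0:ℝ) < a := A_rpos (m+2)
    have hbpos : (0:ℝ) < b := A_rpos (m+3)
    have ha2 : (3:ℝ) ≤ a := by
      rw [ha]; exact_mod_cast le_trans (show 3 ≤ m+2+1 by omega) (A_ge (m+2))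
    have hab : a ≤ b := by
      rw [ha, hb]; show (A (m+2):ℝ) ≤ (A (m+2+1):ℝ); exact_mod_cast A_le (m+2)
    have hA1pos : (0:ℝ) < A (m+1) := A_rpos (m+1)
    have hA1two : (2:ℝ) ≤ A (m+1) := by exact_mod_cast le_trans (by omega) (A_ge (m+1))
    set x : ℝ := 1 / (A (m+1) : ℝ) with hx
    have hx0 : 0 < x := by positivity
    have hx2 : x ≤ 1/2 := by rw [hx]; rw [div_le_div_iff₀ hA1pos (by norm_num)]; linarith
    -- upper: A(m+4) ≤ a*b
    have hub : (A (m+4) : ℝ) ≤ a * b := by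
      have := A_ub (m+2) (le_trans (by omega) (A_ge (m+2)))
      exact this
    -- b ≥ A(m+1) * a / 2
    have hblow : (A (m+1) : ℝ) * a / 2 ≤ b := A_lb (m+1)
    -- lower: A(m+4) ≥ a*b*(1-x)
    have hlb : a * b * (1 - x) ≤ (A (m+4) : ℝ) := by
      have hk := key (m+2)
      have habx : a * b * x ≥ a^2 / 2 := by
        rw [hx]
        rw [ge_iff_le, div_le_iff₀ (by norm_num : (0:ℝ) < 2)]
        have : a * b * (1 / (A (m+1):ℝ)) * 2 = 2 * a * b / (A (m+1):ℝ) := by ring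
        rw [this, le_div_iff₀ hA1pos]
        nlinarith
      nlinarith
    have hratio : (0:ℝ) < a * b * (1 - x) := by
      apply mul_pos (mul_pos hapos hbpos); linarith
    have hlog_ub : B (m+4) - B (m+3) - B (m+2) ≤ 0 := by
      have := Real.log_le_log (A_rpos (m+4)) hub
      rw [Real.log_mul (ne_of_gt hapos) (ne_of_gt hbpos)] at this
      show Real.log (A (m+4)) - Real.log (A (m+3)) - Real.log (A (m+2)) ≤ 0
      linarith
    have hlog_lb : -(2*x) ≤ B (m+4) - B (m+3) - B (m+2) := by
      have h1 := Real.log_le_log (by positivity) hlb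
      rw [Real.log_mul (by positivity) (by linarith : (1:ℝ) - x ≠ 0)] at h1
      · rw [Real.log_mul (ne_of_gt hapos) (ne_of_gt hbpos)] at h1
        have h2 := log_one_sub_ge x (le_of_lt hx0) hx2
        show -(2*x) ≤ Real.log (A (m+4)) - Real.log (A (m+3)) - Real.log (A (m+2))
        linarith
    have hxsmall : 2 * x ≤ 16 * (1/2:ℝ)^(m+2) := by
      have hp := A_pow (m+1)
      have h2p : (0:ℝ) < 2^(m+1) := by positivity
      have e : (16:ℝ) * (1/2)^(m+2) = 8 / 2^(m+1) := by
        rw [div_pow, one_pow]; field_simp; ring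
      have e2 : 2 * x = 2 / (A (m+1):ℝ) := by rw [hx]; ring
      rw [e2, e, div_le_div_iff₀ hA1pos h2p]
      nlinarith [hp]
    rw [abs_le]
    constructor
    · linarith
    · have : (0:ℝ) ≤ 16 * (1/2:ℝ)^(m+2) := by positivity
      linarith

noncomputable def u (n : ℕ) : ℝ := B (n+1) - φ * B n

lemma u_bound (n : ℕ) : |u n| ≤ 200 * (3/4:ℝ)^n := by
  induction n with
  | zero =>
    rw [u, B1, B0]
    simp
    rw [abs_of_nonneg (Real.log_nonneg (by norm_num))]
    linarith [Real.log_le_sub_one_of_pos (by norm_num : (0:ℝ) < 2)]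
  | succ n ih =>
    have hrec : u (n+1) = (1 - φ) * u n + (B (n+2) - B (n+1) - B n) := by
      show B (n+2) - φ * B (n+1) = (1 - φ) * (B (n+1) - φ * B n) + (B (n+2) - B (n+1) - B n)
      linear_combination (-(B n)) * φ_sq
    have h1 : |u (n+1)| ≤ |1 - φ| * |u n| + |B (n+2) - B (n+1) - B n| := by
      rw [hrec]
      calc |(1 - φ) * u n + (B (n+2) - B (n+1) - B n)|
          ≤ |(1 - φ) * u n| + |B (n+2) - B (n+1) - B n| := abs_add_le _ _
        _ = |1 - φ| * |u n| + |B (n+2) - B (n+1) - B n| := by rw [abs_mul]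
    have h2 : |1 - φ| = φ - 1 := by
      rw [abs_of_nonpos (by linarith [φ_gt])]; ring
    have h3 : (1/2:ℝ)^n ≤ (3/4:ℝ)^n := by
      apply pow_le_pow_left₀ (by norm_num) (by norm_num)
    have h4 : (0:ℝ) < (3/4:ℝ)^n := by positivity
    calc |u (n+1)| ≤ (φ - 1) * |u n| + 16 * (1/2:ℝ)^n := by
          rw [h2] at h1; linarith [eps_bound n]
      _ ≤ (φ - 1) * (200 * (3/4:ℝ)^n) + 16 * (3/4:ℝ)^n := by
          have hφ1 : 0 ≤ φ - 1 := by linarith [φ_gt]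
          nlinarith [ih, abs_nonneg (u n)]
      _ ≤ 200 * (3/4:ℝ)^(n+1) := by
          have := φ_lt
          rw [pow_succ]
          nlinarith


lemma A2v : A 2 = 3 := rfl
lemma A3v : A 3 = 6 := rfl
lemma f_summable' : True := trivial

noncomputable def f (k : ℕ) : ℝ := u k / φ^(k+1)

lemma φ_pow_pos (n : ℕ) : (0:ℝ) < φ^n := pow_pos φ_pos n

lemma f_bound (k : ℕ) : ‖f k‖ ≤ 200 * (3/4:ℝ)^k := by
  rw [f, Real.norm_eq_abs, abs_div, abs_of_pos (φ_pow_pos (k+1))]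
  calc |u k| / φ^(k+1) ≤ |u k| / 1 := by
        apply div_le_div_of_nonneg_left (abs_nonneg _) one_pos (one_le_φ_pow (k+1))
    _ = |u k| := div_one _
    _ ≤ 200 * (3/4:ℝ)^k := u_bound k

lemma geom_summable : Summable (fun k : ℕ => 200 * (3/4:ℝ)^k) :=
  (summable_geometric_of_lt_one (by norm_num) (by norm_num)).mul_left 200

lemma f_summable : Summable f :=
  Summable.of_norm_bounded geom_summable f_bound

noncomputable def c : ℝ := ∑' k, f k

lemma B_eq (n : ℕ) : B n = φ^n * ∑ k ∈ Finset.range n, f k := by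
  induction n with
  | zero => simpa using B0
  | succ n ih =>
    rw [Finset.sum_range_succ, mul_add, f]
    have hφn : (φ:ℝ)^(n+1) ≠ 0 := ne_of_gt (φ_pow_pos (n+1))
    have : φ^(n+1) * (u n / φ^(n+1)) = u n := by field_simp
    rw [this, u]
    have : φ^(n+1) * ∑ k ∈ Finset.range n, f k = φ * B n := by
      rw [ih, pow_succ]; ring
    rw [this]; ring

lemma fφ_bound (n k : ℕ) : φ^n * ‖f (k+n)‖ ≤ 200 * (3/4:ℝ)^(k+n) := by
  rw [f, Real.norm_eq_abs, abs_div, abs_of_pos (φ_pow_pos (k+n+1))]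
  have hle : φ^n ≤ φ^(k+n+1) := pow_le_pow_right₀ (by linarith [φ_gt]) (by omega)
  have h1 : φ^n * (|u (k+n)| / φ^(k+n+1)) ≤ |u (k+n)| := by
    rw [mul_div_assoc']
    rw [div_le_iff₀ (φ_pow_pos (k+n+1))]
    have := abs_nonneg (u (k+n))
    nlinarith
  exact le_trans h1 (u_bound (k+n))

lemma geom_shift (n : ℕ) : Summable (fun k : ℕ => 200 * (3/4:ℝ)^(k+n)) := by
  have e : (fun k : ℕ => 200 * (3/4:ℝ)^(k+n)) = fun k : ℕ => (200 * (3/4:ℝ)^n) * (3/4:ℝ)^k := by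
    funext k; rw [pow_add]; ring
  rw [e]
  exact (summable_geometric_of_lt_one (by norm_num) (by norm_num)).mul_left _

lemma tail_bound (n : ℕ) : |B n - c * φ^n| ≤ 800 * (3/4:ℝ)^n := by
  have hsum := Summable.sum_add_tsum_nat_add (f := f) n f_summable
  have hfn : Summable (fun k : ℕ => f (k + n)) := (summable_nat_add_iff (f := f) n).2 f_summable
  have hfnn : Summable (fun k : ℕ => ‖f (k + n)‖) := by
    apply Summable.of_nonneg_of_le (fun k => norm_nonneg _) (fun k => f_bound (k+n)) (geom_shift n)
  have heq : B n - c * φ^n = -(φ^n * ∑' k, f (k + n)) := by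
    rw [B_eq n, c, ← hsum]; ring
  rw [heq, abs_neg, abs_mul, abs_of_pos (φ_pow_pos n)]
  have h1 : |∑' k, f (k + n)| ≤ ∑' k, ‖f (k + n)‖ := norm_tsum_le_tsum_norm hfnn
  have h2 : φ^n * ∑' k, ‖f (k + n)‖ = ∑' k, φ^n * ‖f (k + n)‖ := (tsum_mul_left).symm
  have h3 : ∑' k, φ^n * ‖f (k + n)‖ ≤ ∑' k, 200 * (3/4:ℝ)^(k+n) := by
    apply Summable.tsum_le_tsum (fun k => fφ_bound n k) (hfnn.mul_left _) (geom_shift n)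
  have h4 : ∑' k, 200 * (3/4:ℝ)^(k+n) = 800 * (3/4:ℝ)^n := by
    have e : (fun k : ℕ => 200 * (3/4:ℝ)^(k+n)) = fun k : ℕ => (200 * (3/4:ℝ)^n) * (3/4:ℝ)^k := by
      funext k; rw [pow_add]; ring
    rw [e, tsum_mul_left, tsum_geometric_of_lt_one (by norm_num) (by norm_num)]
    norm_num; ring
  have hφn := φ_pow_pos n
  calc φ^n * |∑' k, f (k + n)| ≤ φ^n * ∑' k, ‖f (k + n)‖ := by nlinarith
    _ = ∑' k, φ^n * ‖f (k + n)‖ := h2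
    _ ≤ ∑' k, 200 * (3/4:ℝ)^(k+n) := h3
    _ = 800 * (3/4:ℝ)^n := h4

lemma diff_tendsto : Tendsto (fun n : ℕ => B n - c * φ^n) atTop (nhds 0) := by
  apply squeeze_zero_norm (a := fun n : ℕ => 800 * (3/4:ℝ)^n) ?_ ?_
  · intro n; rw [Real.norm_eq_abs]; exact tail_bound n
  have h := (tendsto_pow_atTop_nhds_zero_of_lt_one (by norm_num : (0:ℝ) ≤ 3/4) (by norm_num)).const_mul (800:ℝ)
  simpa using h

-- lower bound for c
noncomputable def mm : ℝ := Real.log (3/2) / φ^3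

lemma mm_pos : 0 < mm := div_pos (Real.log_pos (by norm_num)) (φ_pow_pos 3)

lemma B_fib : ∀ n, mm * φ^(n+2) + Real.log 2 ≤ B (n+2) := by
  have hb2 : B 2 = Real.log 3 := by
    show Real.log (A 2) = Real.log 3
    norm_num [A2v]
  have hb3 : B 3 = Real.log 6 := by
    show Real.log (A 3) = Real.log 6
    norm_num [A3v]
  have hl32 : Real.log 3 = Real.log (3/2) + Real.log 2 := by
    rw [← Real.log_mul (by norm_num) (by norm_num)]; norm_num
  have hl6 : Real.log 6 = Real.log 3 + Real.log 2 := by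
    rw [← Real.log_mul (by norm_num) (by norm_num)]; norm_num
  have hmmφ3 : mm * φ^3 = Real.log (3/2) := by
    rw [mm, div_mul_cancel₀ _ (ne_of_gt (φ_pow_pos 3))]
  have hlog32_pos : 0 < Real.log (3/2) := Real.log_pos (by norm_num)
  have hlog2_pos : 0 < Real.log 2 := Real.log_pos (by norm_num)
  have hφ1 : 1 < φ := by linarith [φ_gt]
  intro n
  induction n using Nat.twoStepInduction with
  | zero =>
    rw [hb2, hl32]
    have : mm * φ^2 ≤ mm * φ^3 := by
      apply mul_le_mul_of_nonneg_left (pow_le_pow_right₀ (le_of_lt hφ1) (by omega)) (le_of_lt mm_pos)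
    rw [hmmφ3] at this; linarith
  | one =>
    rw [hb3, hl6, hl32]
    have : mm * φ^3 = Real.log (3/2) := hmmφ3
    linarith
  | more n ih1 ih2 =>
    have ih2' : mm * φ^(n+3) + Real.log 2 ≤ B (n+3) := ih2
    have hlow := B_low (n+2)
    have hfib : φ^(n+4) = φ^(n+3) + φ^(n+2) := by
      have : φ^(n+4) = φ^(n+2) * φ^2 := by ring
      rw [this, φ_sq]; ring
    have goal : mm * φ^(n+4) + Real.log 2 ≤ B (n+4) := by
      rw [hfib]
      have := mm_pos
      nlinarith [ih1, ih2', hlow]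
    exact goal

lemma ratio_tendsto : Tendsto (fun n : ℕ => B n / φ^n - c) atTop (nhds 0) := by
  apply squeeze_zero_norm (a := fun n : ℕ => 800 * (3/4:ℝ)^n)
  · intro n
    rw [Real.norm_eq_abs]
    have hφn := φ_pow_pos n
    have h1 : B n / φ^n - c = (B n - c * φ^n) / φ^n := by field_simp
    rw [h1, abs_div, abs_of_pos hφn]
    calc |B n - c * φ^n| / φ^n ≤ |B n - c * φ^n| / 1 := by
          apply div_le_div_of_nonneg_left (abs_nonneg _) one_pos (one_le_φ_pow n)
      _ = |B n - c * φ^n| := div_one _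
      _ ≤ 800 * (3/4:ℝ)^n := tail_bound n
  · have h := (tendsto_pow_atTop_nhds_zero_of_lt_one (by norm_num : (0:ℝ) ≤ 3/4) (by norm_num)).const_mul (800:ℝ)
    simpa using h

lemma c_pos : 0 < c := by
  have hlim : Tendsto (fun n : ℕ => B n / φ^n) atTop (nhds c) := by
    have := ratio_tendsto.add_const c
    simpa using this
  have hev : ∀ᶠ n : ℕ in atTop, mm ≤ B n / φ^n := by
    filter_upwards [eventually_ge_atTop 2] with n hn
    obtain ⟨k, rfl⟩ := Nat.exists_eq_add_of_le hn
    have := B_fib k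
    have h2 : mm * φ^(k+2) ≤ B (2+k) := by
      have hlog2 : 0 ≤ Real.log 2 := Real.log_nonneg (by norm_num)
      have : B (k+2) = B (2+k) := by rw [Nat.add_comm]
      linarith [this ▸ (B_fib k)]
    rw [le_div_iff₀ (φ_pow_pos (2+k))]
    calc mm * φ^(2+k) = mm * φ^(k+2) := by rw [Nat.add_comm]
      _ ≤ B (2+k) := h2
  have := ge_of_tendsto hlim hev
  linarith [mm_pos, this]

theorem stmt_10 :
    ∃ K₁ K₂ : ℝ, 0 < K₁ ∧ 1 < K₂ ∧
      Tendsto (fun n : ℕ => (A n : ℝ) / (K₁ * K₂ ^ (φ ^ n))) atTop (nhds 1) := by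
  refine ⟨1, Real.exp c, one_pos, ?_, ?_⟩
  · calc (1:ℝ) = Real.exp 0 := by simp
      _ < Real.exp c := Real.exp_lt_exp.2 c_pos
  · have heq : (fun n : ℕ => (A n : ℝ) / (1 * Real.exp c ^ (φ^n)))
        = fun n : ℕ => Real.exp (B n - c * φ^n) := by
      funext n
      rw [one_mul, Real.rpow_def_of_pos (Real.exp_pos c), Real.log_exp, Real.exp_sub]
      congr 1
      exact (Real.exp_log (A_rpos n)).symm
    rw [heq]
    have h : Tendsto (fun n : ℕ => Real.exp (B n - c * φ^n)) atTop (nhds (Real.exp 0)) :=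
      (Real.continuous_exp.tendsto 0).comp diff_tendsto
    rwa [Real.exp_zero] at h
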